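/- Fix r > 0 and the setup of Φ[a,b,c,d]. Any four vectors y_{α₁}, y_{α₂}, y_{α₃}, y_{α₄} ∈ ℂ⁴ with |α_j| = r and the α_j pairwise distinct are linearly independent. -/

import Mathlib

/-- Any four vectors `y_{α_j}` with `|α_j| = r` and the `α_j` pairwise distinct
are linearly independent in `ℂ⁴`. -/
theorem y_alpha_four_linearIndependent (a b c d e f g h k : ℝ)
    (ha : 0 < a) (hb : 0 < b) (hc : 0 < c) (hd : 0 < d) (hab : 1 < a * b)
    (hg : g = Real.sqrt (a * c * d))
    (he : e = a * (c + d) * c / (a * b - 1))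
    (hf : f = a * (c + d) * d / (a * b - 1))
    (hh : h = b * e - c ^ 2) (hk : k = b * f - d ^ 2)
    (r : ℝ) (hr : 0 < r) (α : Fin 4 → ℂ)
    (habs : ∀ j, ‖α j‖ = r) (hinj : Function.Injective α) :
    LinearIndependent ℂ (fun j : Fin 4 =>
      (![(g : ℂ) * α j * (1 - α j),
         α j * ((h : ℂ) - (c : ℂ) * (d : ℂ) * (α j + starRingEnd ℂ (α j)) +
           (k : ℂ) * (‖α j‖ : ℂ) ^ 2),
         -((e : ℂ) + (f : ℂ) * (‖α j‖ : ℂ) ^ 2),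
         -(starRingEnd ℂ (α j)) * ((c : ℂ) + (d : ℂ) * α j)] : Fin 4 → ℂ)) := by
  have hab1 : (0:ℝ) < a * b - 1 := by linarith
  set β : Fin 4 → ℂ := fun j => starRingEnd ℂ (α j) with hβdef
  have hβα : ∀ j, α j * β j = (r:ℂ)^2 := by
    intro j
    rw [hβdef, Complex.mul_conj, Complex.normSq_eq_norm_sq, habs j]
    push_cast
    ring
  have hα0 : ∀ j, α j ≠ 0 := by
    intro j hj
    have := habs j
    rw [hj] at this
    simp at this
    exact hr.ne' this.symm
  -- the constant matrix M
  set M : Matrix (Fin 4) (Fin 4) ℂ :=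
    !![0, (g:ℂ), -(g:ℂ), 0;
       -((c:ℂ)*(d:ℂ)*(r:ℂ)^2), (h:ℂ) + (k:ℂ)*(r:ℂ)^2, -((c:ℂ)*(d:ℂ)), 0;
       -((e:ℂ) + (f:ℂ)*(r:ℂ)^2), 0, 0, 0;
       -((d:ℂ)*(r:ℂ)^2), 0, 0, -(c:ℂ)] with hM
  set V : Matrix (Fin 4) (Fin 4) ℂ :=
    Matrix.of (fun j => ![1, α j, α j ^ 2, β j]) with hV
  have hAeq : (fun j : Fin 4 =>
      (![(g : ℂ) * α j * (1 - α j),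
         α j * ((h : ℂ) - (c : ℂ) * (d : ℂ) * (α j + starRingEnd ℂ (α j)) +
           (k : ℂ) * (‖α j‖ : ℂ) ^ 2),
         -((e : ℂ) + (f : ℂ) * (‖α j‖ : ℂ) ^ 2),
         -(starRingEnd ℂ (α j)) * ((c : ℂ) + (d : ℂ) * α j)] : Fin 4 → ℂ))
      = fun j => (V * M.transpose) j := by
    funext j i
    have h1 : α j * starRingEnd ℂ (α j) = (r:ℂ)^2 := hβα j
    have h2 : ((‖α j‖ : ℂ))^2 = (r:ℂ)^2 := by rw [habs j]
    have hmm : (V * M.transpose) j i = ∑ l, V j l * M i l := by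
      simp [Matrix.mul_apply, Matrix.transpose_apply]
    rw [hmm]
    fin_cases i <;>
      simp [hM, hV, Fin.sum_univ_four, h2, ← hβdef] <;>
      first
        | linear_combination (-(c:ℂ)*(d:ℂ)) * h1
        | linear_combination ((c:ℂ)*(d:ℂ)) * h1
        | linear_combination (-(d:ℂ)) * h1
        | linear_combination (d:ℂ) * h1
        | ring
  rw [hAeq]
  change LinearIndependent ℂ (V * M.transpose).row
  rw [Matrix.linearIndependent_rows_iff_isUnit, Matrix.isUnit_iff_isUnit_det,
    isUnit_iff_ne_zero, Matrix.det_mul, Matrix.det_transpose]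
  apply mul_ne_zero
  · -- det V ≠ 0
    set C : Matrix (Fin 4) (Fin 4) ℂ :=
      !![0, 0, 0, (r:ℂ)^2; 1, 0, 0, 0; 0, 1, 0, 0; 0, 0, 1, 0] with hC
    have hDV : Matrix.diagonal α * V = Matrix.vandermonde α * C := by
      funext i l
      have h1 := hβα i
      have hL : (Matrix.diagonal α * V) i l = α i * V i l := by
        rw [Matrix.diagonal_mul]
      have hR : (Matrix.vandermonde α * C) i l
          = ∑ m : Fin 4, α i ^ (m : ℕ) * C m l := by
        simp [Matrix.mul_apply, Matrix.vandermonde]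
      rw [hL, hR]
      fin_cases l <;>
        norm_num [hC, hV, Fin.sum_univ_succ, Matrix.vecHead, Matrix.vecTail, Matrix.cons_val,
          show ((0:Fin 4):ℕ) = 0 from rfl, show ((1:Fin 4):ℕ) = 1 from rfl,
          show ((2:Fin 4):ℕ) = 2 from rfl, show ((3:Fin 4):ℕ) = 3 from rfl] <;>
        first
          | linear_combination h1
          | ring
    have hdetC : C.det = -((r:ℂ)^2) := by
      rw [hC]
      rw [Matrix.det_succ_row_zero]
      simp [Fin.sum_univ_succ, Matrix.det_fin_three, Fin.succAbove]
      ring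
    have hvand : (Matrix.vandermonde α).det ≠ 0 :=
      Matrix.det_vandermonde_ne_zero_iff.mpr hinj
    have hr2 : ((r:ℂ)^2) ≠ 0 :=
      pow_ne_zero 2 (Complex.ofReal_ne_zero.mpr hr.ne')
    have hprod : (∏ j, α j) ≠ 0 := Finset.prod_ne_zero_iff.mpr fun j _ => hα0 j
    have hdets := congrArg Matrix.det hDV
    rw [Matrix.det_mul, Matrix.det_mul, Matrix.det_diagonal, hdetC] at hdets
    intro h0
    rw [h0, mul_zero] at hdets
    exact mul_ne_zero hvand (neg_ne_zero.mpr hr2) hdets.symm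
  · -- det M ≠ 0
    have hdetM : M.det =
        ((c * (e + f * r^2) * g * (h + k * r^2 - c * d) : ℝ) : ℂ) := by
      rw [hM]
      rw [Matrix.det_succ_row_zero]
      simp [Fin.sum_univ_succ, Matrix.det_fin_three, Fin.succAbove]
      ring
    rw [hdetM]
    simp only [ne_eq, Complex.ofReal_eq_zero]
    have hef : 0 < e + f * r^2 := by
      have he' : 0 < e := by rw [he]; positivity
      have hf' : 0 < f := by rw [hf]; positivity
      positivity
    have hg' : 0 < g := by
      rw [hg]; exact Real.sqrt_pos.mpr (by positivity)
    have hhk : 0 < h + k * r^2 - c * d := by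
      have : h + k * r^2 - c * d
          = (c * (c + d) + r^2 * d * (a * b * c + d)) / (a * b - 1) := by
        rw [hh, hk, he, hf]
        have hne : b * a - 1 ≠ 0 := by rw [mul_comm]; exact hab1.ne'
        field_simp
        ring
      rw [this]
      positivity
    positivity
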